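/- Let f, g₁, g₂ be continuous ρ-periodic functions with f > 0, g₁(t) ≥ g₂(t) for all t, and ∫₀^ρ g₂ > 0. If v₁, v₂ are the strictly positive ρ-periodic solutions of v' = g₁(t)v - f(t)v² and v' = g₂(t)v - f(t)v² respectively, then v₁(t) ≥ v₂(t) for all t. -/

import Mathlib

/-- Comparison of strictly positive ρ-periodic solutions of Bernoulli equations
v' = g₁·v - f·v² and v' = g₂·v - f·v² when g₁ ≥ g₂. -/
theorem bernoulli_periodic_solution_comparison
    (ρ : ℝ) (hρ : 0 < ρ) (f g₁ g₂ : ℝ → ℝ)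
    (hf : Continuous f) (hg₁ : Continuous g₁) (hg₂ : Continuous g₂)
    (hfp : Function.Periodic f ρ) (hg₁p : Function.Periodic g₁ ρ)
    (hg₂p : Function.Periodic g₂ ρ)
    (hfpos : ∀ t, 0 < f t)
    (hgle : ∀ t, g₂ t ≤ g₁ t)
    (hg₂int : 0 < ∫ s in (0:ℝ)..ρ, g₂ s)
    (v₁ v₂ : ℝ → ℝ)
    (hv₁pos : ∀ t, 0 < v₁ t) (hv₂pos : ∀ t, 0 < v₂ t)
    (hv₁ : ∀ t, HasDerivAt v₁ (g₁ t * v₁ t - f t * (v₁ t) ^ 2) t)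
    (hv₂ : ∀ t, HasDerivAt v₂ (g₂ t * v₂ t - f t * (v₂ t) ^ 2) t)
    (hp₁ : Function.Periodic v₁ ρ) (hp₂ : Function.Periodic v₂ ρ) :
    ∀ t, v₂ t ≤ v₁ t := by
  set u : ℝ → ℝ := fun t => v₂ t / v₁ t with hu
  have hud : ∀ t, HasDerivAt u
      (((g₂ t * v₂ t - f t * (v₂ t) ^ 2) * v₁ t -
        v₂ t * (g₁ t * v₁ t - f t * (v₁ t) ^ 2)) / (v₁ t) ^ 2) t := fun t =>
    (hv₂ t).div (hv₁ t) (hv₁pos t).ne'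
  have hc₁ : Continuous v₁ := continuous_iff_continuousAt.mpr fun t => ((hv₁ t).differentiableAt).continuousAt
  have hc₂ : Continuous v₂ := continuous_iff_continuousAt.mpr fun t => ((hv₂ t).differentiableAt).continuousAt
  have hucont : Continuous u := hc₂.div hc₁ fun t => (hv₁pos t).ne'
  have hup : Function.Periodic u ρ := fun t => by simp only [hu, hp₁ t, hp₂ t]
  -- u attains a global maximum at some t₀
  obtain ⟨t₀, -, ht₀⟩ :=
    (isCompact_Icc : IsCompact (Set.Icc (0:ℝ) ρ)).exists_isMaxOn
      (Set.nonempty_Icc.mpr hρ.le) hucont.continuousOn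
  have hmax : ∀ t, u t ≤ u t₀ := by
    intro t
    obtain ⟨y, hy, hey⟩ := hup.exists_mem_Ico₀ hρ t
    rw [hey]
    exact ht₀ (Set.mem_Icc_of_Ico hy)
  -- show u t₀ ≤ 1
  have hle1 : u t₀ ≤ 1 := by
    by_contra h
    push_neg at h
    have hlt : v₁ t₀ < v₂ t₀ := by
      have := (one_lt_div (hv₁pos t₀)).mp h
      exact this
    have hloc : IsLocalMax u t₀ := Filter.Eventually.of_forall hmax
    have hzero := hloc.hasDerivAt_eq_zero (hud t₀)
    have hnum : (g₂ t₀ * v₂ t₀ - f t₀ * (v₂ t₀) ^ 2) * v₁ t₀ -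
        v₂ t₀ * (g₁ t₀ * v₁ t₀ - f t₀ * (v₁ t₀) ^ 2) = 0 := by
      have h2 : (v₁ t₀) ^ 2 ≠ 0 := pow_ne_zero _ (hv₁pos t₀).ne'
      field_simp at hzero
      rw [div_eq_zero_iff, mul_eq_zero] at hzero
      rcases hzero with (h5 | h5) | h5
      · linarith [hv₂pos t₀]
      · linear_combination (v₁ t₀ * v₂ t₀) * h5
      · linarith [hv₁pos t₀]
    nlinarith [mul_pos (hv₁pos t₀) (hv₂pos t₀), hgle t₀, hfpos t₀,
      mul_pos (mul_pos (hfpos t₀) (hv₁pos t₀)) (hv₂pos t₀),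
      mul_pos (mul_pos (mul_pos (hfpos t₀) (hv₁pos t₀)) (hv₂pos t₀)) (sub_pos.mpr hlt)]
  intro t
  have := (hmax t).trans hle1
  rw [hu] at this
  exact (div_le_one (hv₁pos t)).mp this
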